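/- Let (c_n) be a sequence of positive reals with Σ c_n divergent, and let c₀((c_n)) be the Banach space of real sequences (x_n) with x_n/c_n → 0, normed by ‖(x_n)‖ = sup_n |x_n/c_n|. Then the set of (x_n) ∈ c₀((c_n)) for which the series Σ x_n diverges is 𝔠-lineable: it contains, apart from 0, a vector subspace of dimension continuum. -/

import Mathlib

open Filter

lemma aux_tendsto_zero (a : ↥(Set.Ioo (0:ℝ) 1) →₀ ℝ) :
    Tendsto (fun u : ℝ => ∑ t ∈ a.support, a t * u ^ (-(t:ℝ))) atTop (nhds 0) := by
  have h : Tendsto (fun u : ℝ => ∑ t ∈ a.support, a t * u ^ (-(t:ℝ))) atTop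
      (nhds (∑ _t ∈ a.support, (0:ℝ))) := by
    refine tendsto_finset_sum _ (fun t _ => ?_)
    have := (tendsto_rpow_neg_atTop t.2.1).const_mul (a t)
    simpa using this
  simpa using h

lemma aux_atTop (a : ↥(Set.Ioo (0:ℝ) 1) →₀ ℝ) (ha : a ≠ 0) :
    Tendsto (fun K : ℕ => ((K:ℝ)+1) * |∑ t ∈ a.support, a t * ((K:ℝ)+1) ^ (-(t:ℝ))|)
      atTop atTop := by
  have hs : a.support.Nonempty := Finsupp.support_nonempty_iff.2 ha
  set t0 := a.support.min' hs with ht0def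
  have ht0s : t0 ∈ a.support := a.support.min'_mem hs
  have ha0 : a t0 ≠ 0 := Finsupp.mem_support_iff.1 ht0s
  have hU : Tendsto (fun K : ℕ => (K:ℝ)+1) atTop atTop :=
    tendsto_atTop_add_const_right _ 1 tendsto_natCast_atTop_atTop
  have hUpos : ∀ K : ℕ, (0:ℝ) < (K:ℝ)+1 := fun K => by positivity
  have hF : Tendsto (fun K : ℕ => ((K:ℝ)+1) ^ ((t0:ℝ)) *
      ∑ t ∈ a.support, a t * ((K:ℝ)+1) ^ (-(t:ℝ))) atTop (nhds (a t0)) := by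
    have heq : ∀ K : ℕ, ((K:ℝ)+1) ^ ((t0:ℝ)) * ∑ t ∈ a.support, a t * ((K:ℝ)+1) ^ (-(t:ℝ))
        = ∑ t ∈ a.support, a t * ((K:ℝ)+1) ^ ((t0:ℝ) - (t:ℝ)) := by
      intro K
      rw [Finset.mul_sum]
      refine Finset.sum_congr rfl (fun t _ => ?_)
      rw [show (t0:ℝ) - (t:ℝ) = (t0:ℝ) + (-(t:ℝ)) by ring, Real.rpow_add (hUpos K)]
      ring
    have h1 : Tendsto (fun K : ℕ => ∑ t ∈ a.support, a t * ((K:ℝ)+1) ^ ((t0:ℝ) - (t:ℝ)))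
        atTop (nhds (∑ t ∈ a.support, if t = t0 then a t0 else 0)) := by
      refine tendsto_finset_sum _ (fun t ht => ?_)
      by_cases h : t = t0
      · subst h
        simpa [Real.rpow_zero] using
          (tendsto_const_nhds : Tendsto (fun _ : ℕ => a t) atTop (nhds (a t)))
      · have hlt : (t0:ℝ) < (t:ℝ) :=
          lt_of_le_of_ne (Subtype.coe_le_coe.2 (a.support.min'_le t ht))
            (fun he => h (Subtype.ext he).symm)
        have h2 : Tendsto (fun K : ℕ => a t * ((K:ℝ)+1) ^ (-((t:ℝ) - (t0:ℝ))))
            atTop (nhds 0) := by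
          have h3 := ((tendsto_rpow_neg_atTop
            (show (0:ℝ) < (t:ℝ)-(t0:ℝ) by linarith)).comp hU).const_mul (a t)
          simpa [Function.comp] using h3
        rw [if_neg h, show (t0:ℝ) - (t:ℝ) = -((t:ℝ)-(t0:ℝ)) by ring]
        exact h2
    have h3 : (∑ t ∈ a.support, if t = t0 then a t0 else 0) = a t0 := by
      rw [Finset.sum_ite_eq' a.support t0 (fun _ => a t0), if_pos ht0s]
    rw [h3] at h1
    exact (tendsto_congr heq).2 h1
  have hFabs : Tendsto (fun K : ℕ => ((K:ℝ)+1) ^ ((t0:ℝ)) *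
      |∑ t ∈ a.support, a t * ((K:ℝ)+1) ^ (-(t:ℝ))|) atTop (nhds |a t0|) := by
    have := hF.abs
    refine this.congr (fun K => ?_)
    rw [abs_mul, abs_of_pos (Real.rpow_pos_of_pos (hUpos K) _)]
  have hpow : Tendsto (fun K : ℕ => ((K:ℝ)+1) ^ (1 - (t0:ℝ))) atTop atTop :=
    (tendsto_rpow_atTop (by linarith [t0.2.2])).comp hU
  have hfin := Filter.Tendsto.atTop_mul_pos (abs_pos.2 ha0) hpow hFabs
  refine hfin.congr (fun K => ?_)
  rw [← mul_assoc, ← Real.rpow_add (hUpos K)]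
  norm_num

theorem stmt_15 (c : ℕ → ℝ) (hc : ∀ n, 0 < c n) (hdiv : ¬ Summable c) :
    ∃ M : Submodule ℝ (ℕ → ℝ), Module.rank ℝ M = Cardinal.continuum ∧
      ∀ x ∈ M, Tendsto (fun n => x n / c n) atTop (nhds 0) ∧
        (x ≠ 0 →
          ¬ ∃ l : ℝ, Tendsto (fun N => ∑ i ∈ Finset.range N, x i) atTop (nhds l)) := by
  classical
  set S : ℕ → ℝ := fun m => ∑ i ∈ Finset.range m, c i with hSdef
  have hS : Tendsto S atTop atTop :=
    (not_summable_iff_tendsto_nat_atTop_of_nonneg (fun i => (hc i).le)).1 hdiv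
  have key : ∀ k m : ℕ, ∃ n : ℕ, m < n ∧ S m + ((k:ℝ)+1) ≤ S n := by
    intro k m
    obtain ⟨n, hn1, hn2⟩ :=
      ((hS.eventually_ge_atTop (S m + ((k:ℝ)+1))).and (eventually_gt_atTop m)).exists
    exact ⟨n, hn2, hn1⟩
  obtain ⟨N, hN0, hNlt, hNsum⟩ : ∃ N : ℕ → ℕ, N 0 = 0 ∧ (∀ k, N k < N (k+1)) ∧
      ∀ k, S (N k) + ((k:ℝ)+1) ≤ S (N (k+1)) := by
    refine ⟨fun k => Nat.rec 0 (fun k nk => (key k nk).choose) k, rfl, ?_, ?_⟩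
    · exact fun k => (key k _).choose_spec.1
    · exact fun k => (key k _).choose_spec.2
  have hNmono : StrictMono N := strictMono_nat_of_lt_succ hNlt
  have hNle : ∀ k, k ≤ N k := fun k => hNmono.le_apply
  -- block index
  obtain ⟨g, hgle, hglt⟩ : ∃ g : ℕ → ℕ, (∀ j, N (g j) ≤ j) ∧ (∀ j, j < N (g j + 1)) := by
    haveI : ∀ j, DecidablePred (fun k => N k ≤ j) := fun j k => Nat.decLe _ _
    refine ⟨fun j => Nat.findGreatest (fun k => N k ≤ j) j, fun j => ?_, fun j => ?_⟩
    · exact Nat.findGreatest_spec (P := fun k => N k ≤ j) (Nat.zero_le j) (le_trans hN0.le (Nat.zero_le j))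
    · by_contra h
      push_neg at h
      have h1 : Nat.findGreatest (fun k => N k ≤ j) j + 1 ≤ j := le_trans (hNle _) h
      have h2 := Nat.le_findGreatest (P := fun k => N k ≤ j) h1 h
      omega
  have hgblock : ∀ k j, N k ≤ j → j < N (k+1) → g j = k := by
    intro k j h1 h2
    rcases lt_trichotomy (g j) k with h | h | h
    · have : N (g j + 1) ≤ N k := hNmono.monotone h
      exact absurd (lt_of_lt_of_le (hglt j) (le_trans this h1)) (lt_irrefl j)
    · exact h
    · have : N (k + 1) ≤ N (g j) := hNmono.monotone h
      exact absurd (lt_of_lt_of_le h2 (le_trans this (hgle j))) (lt_irrefl j)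
  have hgtop : Tendsto g atTop atTop := by
    refine tendsto_atTop_atTop.2 (fun b => ⟨N b, fun j hj => ?_⟩)
    by_contra h
    push_neg at h
    have : N (g j + 1) ≤ N b := hNmono.monotone h
    exact absurd (lt_of_lt_of_le (hglt j) (le_trans this hj)) (lt_irrefl j)
  have hgtopR : Tendsto (fun j : ℕ => ((g j : ℝ) + 1)) atTop atTop :=
    tendsto_atTop_add_const_right _ 1 (tendsto_natCast_atTop_atTop.comp hgtop)
  -- the family
  set v : ↥(Set.Ioo (0:ℝ) 1) → ℕ → ℝ :=
    fun t j => c j * ((g j : ℝ) + 1) ^ (-(t:ℝ)) with hvdef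
  have hcombo : ∀ (a : ↥(Set.Ioo (0:ℝ) 1) →₀ ℝ) (j : ℕ),
      (a.sum fun t coef => coef • v t) j
        = c j * ∑ t ∈ a.support, a t * ((g j : ℝ)+1) ^ (-(t:ℝ)) := by
    intro a j
    simp only [Finsupp.sum, Finset.sum_apply, Pi.smul_apply, smul_eq_mul, hvdef,
      Finset.mul_sum]
    exact Finset.sum_congr rfl (fun t _ => by ring)
  -- divergence of partial sums for nonzero combinations
  have hdivkey : ∀ a : (↥(Set.Ioo (0:ℝ) 1) →₀ ℝ), a ≠ 0 →
      ¬ ∃ l : ℝ, Tendsto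
        (fun n => ∑ i ∈ Finset.range n, (a.sum fun t coef => coef • v t) i)
        atTop (nhds l) := by
    rintro a ha ⟨l, hl⟩
    set x : ℕ → ℝ := a.sum fun t coef => coef • v t with hxdef
    have hblock : ∀ k : ℕ,
        (∑ i ∈ Finset.range (N (k+1)), x i) - (∑ i ∈ Finset.range (N k), x i)
        = (∑ i ∈ Finset.Ico (N k) (N (k+1)), c i)
            * (∑ t ∈ a.support, a t * ((k:ℝ)+1) ^ (-(t:ℝ))) := by
      intro k
      rw [← Finset.sum_Ico_eq_sub x (hNlt k).le, Finset.sum_mul]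
      refine Finset.sum_congr rfl (fun i hi => ?_)
      rw [Finset.mem_Ico] at hi
      rw [hxdef, hcombo a i, hgblock k i hi.1 hi.2]
    have hblocksum : ∀ k : ℕ, ((k:ℝ)+1) ≤ ∑ i ∈ Finset.Ico (N k) (N (k+1)), c i := by
      intro k
      rw [Finset.sum_Ico_eq_sub c (hNlt k).le]
      have := hNsum k
      simp only [hSdef] at this ⊢
      linarith
    have hlower : ∀ k : ℕ,
        ((k:ℝ)+1) * |∑ t ∈ a.support, a t * ((k:ℝ)+1) ^ (-(t:ℝ))|
          ≤ |(∑ i ∈ Finset.range (N (k+1)), x i) - (∑ i ∈ Finset.range (N k), x i)| := by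
      intro k
      rw [hblock k, abs_mul]
      have h1 : ((k:ℝ)+1) ≤ |∑ i ∈ Finset.Ico (N k) (N (k+1)), c i| :=
        le_trans (hblocksum k) (le_abs_self _)
      exact mul_le_mul_of_nonneg_right h1 (abs_nonneg _)
    have hPN : Tendsto (fun k => ∑ i ∈ Finset.range (N k), x i) atTop (nhds l) :=
      hl.comp hNmono.tendsto_atTop
    have hPN1 : Tendsto (fun k => ∑ i ∈ Finset.range (N (k+1)), x i) atTop (nhds l) :=
      hPN.comp (tendsto_add_atTop_nat 1)
    have hdiff : Tendsto
        (fun k => (∑ i ∈ Finset.range (N (k+1)), x i) - (∑ i ∈ Finset.range (N k), x i))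
        atTop (nhds 0) := by
      have := hPN1.sub hPN
      simpa using this
    have h1 := (aux_atTop a ha).eventually_ge_atTop 1
    have hdiffabs := hdiff.abs
    rw [abs_zero] at hdiffabs
    have h2 := hdiffabs.eventually_lt_const (by norm_num : (0:ℝ) < 1)
    obtain ⟨k, hk1, hk2⟩ := (h1.and h2).exists
    have := le_trans hk1 (hlower k)
    linarith [abs_nonneg ((∑ i ∈ Finset.range (N (k+1)), x i) - (∑ i ∈ Finset.range (N k), x i))]
  -- linear independence
  have hli : LinearIndependent ℝ v := by
    rw [linearIndependent_iff]
    intro a hFa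
    by_contra ha
    refine hdivkey a ha ⟨0, ?_⟩
    rw [Finsupp.linearCombination_apply] at hFa
    have hz : ∀ n, (∑ i ∈ Finset.range n, (a.sum fun t coef => coef • v t) i) = 0 := by
      intro n
      rw [hFa]
      simp
    simpa [hz] using (tendsto_const_nhds : Tendsto (fun _ : ℕ => (0:ℝ)) atTop (nhds 0))
  refine ⟨Submodule.span ℝ (Set.range v), ?_, ?_⟩
  · rw [rank_span hli, Cardinal.mk_range_eq v hli.injective]
    exact Cardinal.mk_Ioo_real zero_lt_one
  · intro x hx
    rw [Finsupp.mem_span_range_iff_exists_finsupp] at hx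
    obtain ⟨a, hax⟩ := hx
    constructor
    · have h0 : Tendsto (fun j : ℕ => ∑ t ∈ a.support, a t * ((g j : ℝ)+1) ^ (-(t:ℝ)))
          atTop (nhds 0) := (aux_tendsto_zero a).comp hgtopR
      refine h0.congr (fun j => ?_)
      rw [← hax, hcombo a j, mul_comm, mul_div_assoc, div_self (hc j).ne', mul_one]
    · intro hx0
      have ha : a ≠ 0 := by
        rintro rfl
        apply hx0
        rw [← hax]
        simp
      have := hdivkey a ha
      rw [hax] at this
      exact this
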